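/- For all p, q ∈ ℂ with q ≠ 0 and p ≠ q: if L and L′ are complex Lie algebras admitting bases realizing the bracket patterns d₅(p,0,q) and d₅(p,p,q) respectively, then L and L′ are isomorphic as Lie algebras over ℂ. -/

import Mathlib

/-- `Realizes L c` means that the complex Lie algebra `L` admits a basis `e₁, …, e₅`
(indexed by `Fin 5`) in which the brackets of basis vectors are given by the
structure constants `c`, i.e. `⁅eᵢ, eⱼ⁆ = ∑ₖ c i j k • eₖ` for all `i < j`,
all brackets of basis vectors being determined by these via antisymmetry. -/
def Realizes (L : Type) [LieRing L] [LieAlgebra ℂ L]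
    (c : Fin 5 → Fin 5 → Fin 5 → ℂ) : Prop :=
  ∃ e : Module.Basis (Fin 5) ℂ L, ∀ i j : Fin 5, i < j →
    ⁅e i, e j⁆ = ∑ k, c i j k • e k

/-- The bracket pattern `d₅(p,q,r)` (indices shifted down by one so the basis is indexed by `Fin 5`): `[e₂,e₄]=e₁+p·e₂`, `[e₃,e₄]=e₂+q·e₃`, `[e₁,e₅]=p(q−r)·e₁`, `[e₂,e₅]=(r−q)·e₁`, `[e₃,e₅]=e₁+r·e₂−r(p−q)·e₃`, all other brackets zero. -/
def d5 (p q r : ℂ) : Fin 5 → Fin 5 → Fin 5 → ℂ := fun i j =>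
  if i = 1 ∧ j = 3 then ![1, p, 0, 0, 0]
  else if i = 2 ∧ j = 3 then ![0, 1, q, 0, 0]
  else if i = 0 ∧ j = 4 then ![p * (q - r), 0, 0, 0, 0]
  else if i = 1 ∧ j = 4 then ![r - q, 0, 0, 0, 0]
  else if i = 2 ∧ j = 4 then ![1, r, -(r * (p - q)), 0, 0]
  else 0

set_option maxHeartbeats 4000000 in
/-- For `q ≠ 0` and `p ≠ q`, Lie algebras realizing the patterns `d₅(p,0,q)`
and `d₅(p,p,q)` are isomorphic. -/
theorem d5_p0q_iso_d5_ppq (p q : ℂ) (hq : q ≠ 0) (hpq : p ≠ q)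
    (L L' : Type) [LieRing L] [LieAlgebra ℂ L] [LieRing L'] [LieAlgebra ℂ L']
    (hL : Realizes L (d5 p 0 q)) (hL' : Realizes L' (d5 p p q)) :
    Nonempty (L ≃ₗ⁅ℂ⁆ L') := by
  obtain ⟨e, he⟩ := hL
  obtain ⟨e', he'⟩ := hL'
  have hpq' : p - q ≠ 0 := sub_ne_zero.mpr hpq
  have hqp' : q - p ≠ 0 := sub_ne_zero.mpr (Ne.symm hpq)
  have haux1 : -(p * q) + q ^ 2 ≠ 0 := by
    intro h; exact mul_ne_zero hq hqp' (by linear_combination h)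
  have haux2 : -(q * p) + q ^ 2 ≠ 0 := by
    intro h; exact mul_ne_zero hq hqp' (by linear_combination h)
  -- the new basis of L' realizing d5 p 0 q
  set v : Fin 5 → L' :=
    ![e' 0 + p • e' 1, (-1 : ℂ) • e' 1, (-q⁻¹) • e' 1 + ((q - p) / q) • e' 2,
      (p - q)⁻¹ • e' 4, (-q) • e' 3] with hv
  set w : Fin 5 → L :=
    ![e 0 + p • e 1, (-1 : ℂ) • e 1, (q - p)⁻¹ • (q • e 2 - e 1),
      (-q⁻¹) • e 4, (p - q) • e 3] with hw
  set f : L →ₗ[ℂ] L' := Module.Basis.constr e ℂ v with hf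
  set g : L' →ₗ[ℂ] L := Module.Basis.constr e' ℂ w with hg
  have hfe : ∀ i, f (e i) = v i := fun i => Module.Basis.constr_basis e ℂ v i
  have hge : ∀ i, g (e' i) = w i := fun i => Module.Basis.constr_basis e' ℂ w i
  -- bracket table lemmas in L'
  have h01 : ⁅e' 0, e' 1⁆ = 0 := by
    rw [he' 0 1 (by decide)]; simp [d5, Fin.sum_univ_five]
  have h02 : ⁅e' 0, e' 2⁆ = 0 := by
    rw [he' 0 2 (by decide)]; simp [d5, Fin.sum_univ_five]
  have h12 : ⁅e' 1, e' 2⁆ = 0 := by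
    rw [he' 1 2 (by decide)]; simp [d5, Fin.sum_univ_five]
  have h03 : ⁅e' 0, e' 3⁆ = 0 := by
    rw [he' 0 3 (by decide)]; simp [d5, Fin.sum_univ_five]
  have h13 : ⁅e' 1, e' 3⁆ = e' 0 + p • e' 1 := by
    rw [he' 1 3 (by decide)]; simp [d5, Fin.sum_univ_five]
  have h23 : ⁅e' 2, e' 3⁆ = e' 1 + p • e' 2 := by
    rw [he' 2 3 (by decide)]; simp [d5, Fin.sum_univ_five]
  have h04 : ⁅e' 0, e' 4⁆ = (p * (p - q)) • e' 0 := by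
    rw [he' 0 4 (by decide)]; simp [d5, Fin.sum_univ_five]
  have h14 : ⁅e' 1, e' 4⁆ = (q - p) • e' 0 := by
    rw [he' 1 4 (by decide)]; simp [d5, Fin.sum_univ_five]
  have h24 : ⁅e' 2, e' 4⁆ = e' 0 + q • e' 1 := by
    rw [he' 2 4 (by decide)]; simp [d5, Fin.sum_univ_five]
  have h34 : ⁅e' 3, e' 4⁆ = 0 := by
    rw [he' 3 4 (by decide)]; simp [d5, Fin.sum_univ_five]
  have h10 : ⁅e' 1, e' 0⁆ = 0 := by rw [← lie_skew, h01, neg_zero]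
  have h20 : ⁅e' 2, e' 0⁆ = 0 := by rw [← lie_skew, h02, neg_zero]
  have h21 : ⁅e' 2, e' 1⁆ = 0 := by rw [← lie_skew, h12, neg_zero]
  have h43 : ⁅e' 4, e' 3⁆ = 0 := by rw [← lie_skew, h34, neg_zero]
  -- key bracket compatibility on basis vectors, for i < j
  have klt : ∀ i j : Fin 5, i < j → f ⁅e i, e j⁆ = ⁅f (e i), f (e j)⁆ := by
    intro i j hij
    rw [he i j hij, hfe, hfe]
    fin_cases i <;> fin_cases j <;>
      first
      | exact absurd hij (by decide)
      | (simp [hv, d5, Fin.sum_univ_five, hfe, map_add, map_smul, map_neg, map_zero, lie_add,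
          add_lie, lie_smul, smul_lie, lie_self, h01, h02, h12, h03, h13, h23, h04, h14, h24,
          h34, h10, h20, h21, h43, smul_smul, smul_add, smul_neg, neg_smul] <;>
         match_scalars <;> field_simp <;> ring)
  have key : ∀ i j : Fin 5, f ⁅e i, e j⁆ = ⁅f (e i), f (e j)⁆ := by
    intro i j
    rcases lt_trichotomy i j with h | h | h
    · exact klt i j h
    · subst h; simp
    · have := klt j i h
      rw [← lie_skew (e i) (e j), map_neg, this, ← lie_skew (f (e i)) (f (e j))]
  -- bilinear extension
  have hbil : ∀ x y : L, f ⁅x, y⁆ = ⁅f x, f y⁆ := by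
    let B1 : L →ₗ[ℂ] L →ₗ[ℂ] L' := LinearMap.mk₂ ℂ (fun x y => f ⁅x, y⁆)
      (fun x x' y => by rw [add_lie, map_add])
      (fun c x y => by rw [smul_lie, map_smul])
      (fun x y y' => by rw [lie_add, map_add])
      (fun c x y => by rw [lie_smul, map_smul])
    let B2 : L →ₗ[ℂ] L →ₗ[ℂ] L' := LinearMap.mk₂ ℂ (fun x y => ⁅f x, f y⁆)
      (fun x x' y => by rw [map_add, add_lie])
      (fun c x y => by rw [map_smul, smul_lie])
      (fun x y y' => by rw [map_add, lie_add])
      (fun c x y => by rw [map_smul, lie_smul])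
    have : B1 = B2 := LinearMap.ext_basis e e key
    intro x y
    exact DFunLike.congr_fun (DFunLike.congr_fun this x) y
  -- inverses
  have hgf : ∀ i, g (f (e i)) = e i := by
    intro i
    rw [hfe]
    fin_cases i <;>
      (simp [hv, hw, map_add, map_smul, map_neg, map_sub, hge, smul_smul, smul_add, smul_sub,
        smul_neg, neg_smul] <;>
       match_scalars <;> field_simp [hq, hpq', hqp', haux1, haux2] <;> ring)
  have hfg : ∀ i, f (g (e' i)) = e' i := by
    intro i
    rw [hge]
    fin_cases i <;>
      (simp [hv, hw, map_add, map_smul, map_neg, map_sub, hfe, smul_smul, smul_add, smul_sub,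
        smul_neg, neg_smul] <;>
       match_scalars <;> field_simp [hq, hpq', hqp', haux1, haux2] <;> ring)
  have hgf' : g.comp f = LinearMap.id := by
    apply Module.Basis.ext e; intro i; simpa using hgf i
  have hfg' : f.comp g = LinearMap.id := by
    apply Module.Basis.ext e'; intro i; simpa using hfg i
  let F : L ≃ₗ[ℂ] L' := LinearEquiv.ofLinear f g hfg' hgf'
  exact ⟨{ toFun := F
           map_add' := F.map_add
           map_smul' := F.map_smul
           map_lie' := fun {x y} => hbil x y
           invFun := F.symm
           left_inv := F.left_inv
           right_inv := F.right_inv }⟩
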